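/- Let n ≥ 1 be an integer, let S_n = ℂ[x,y]/(xⁿ − yⁿ), and let μ : S_n → S_n denote multiplication by the class of x − y. Then both the kernel of μ and the cokernel of μ are free modules of rank n over the subring ℂ[xⁿ] of S_n generated by the class of xⁿ. -/

import Mathlib

open MvPolynomial

/-- The principal ideal `(xⁿ - yⁿ)` in `ℂ[x,y]`. -/
noncomputable abbrev snIdeal (n : ℕ) : Ideal (MvPolynomial (Fin 2) ℂ) :=
  Ideal.span {X 0 ^ n - X 1 ^ n}

/-- Multiplication by the class of `x - y` on `S_n = ℂ[x,y]/(xⁿ - yⁿ)`, as an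
`S_n`-linear endomorphism. -/
noncomputable abbrev mulXsubY (n : ℕ) :
    (MvPolynomial (Fin 2) ℂ ⧸ snIdeal n) →ₗ[MvPolynomial (Fin 2) ℂ ⧸ snIdeal n]
      (MvPolynomial (Fin 2) ℂ ⧸ snIdeal n) :=
  LinearMap.mulLeft (MvPolynomial (Fin 2) ℂ ⧸ snIdeal n)
    (Ideal.Quotient.mk (snIdeal n) (X 0 - X 1))

/-- The subring `ℂ[xⁿ]` of `S_n = ℂ[x,y]/(xⁿ - yⁿ)` generated (as a `ℂ`-subalgebra)
by the class of `xⁿ`. -/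
noncomputable abbrev cxn (n : ℕ) : Subalgebra ℂ (MvPolynomial (Fin 2) ℂ ⧸ snIdeal n) :=
  Algebra.adjoin ℂ {Ideal.Quotient.mk (snIdeal n) (X 0 ^ n)}

lemma polyIndep (n : ℕ) (hn : 0 < n) (q : Fin n → Polynomial ℂ)
    (h : ∑ i : Fin n, (Polynomial.expand ℂ n (q i)) * Polynomial.X ^ (i : ℕ) = 0) :
    ∀ i, q i = 0 := by
  intro i
  ext k
  have hc := congrArg (fun p => Polynomial.coeff p (n * k + i)) h
  simp only [Polynomial.finset_sum_coeff, Polynomial.coeff_zero] at hc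
  rw [Finset.sum_eq_single i] at hc
  · rw [Polynomial.coeff_mul_X_pow', if_pos (Nat.le_add_left _ _),
      Nat.add_sub_cancel, Polynomial.coeff_expand hn, if_pos ⟨k, rfl⟩,
      Nat.mul_div_cancel_left _ hn] at hc
    simpa using hc
  · intro j _ hji
    rw [Polynomial.coeff_mul_X_pow']
    split_ifs with hle
    · rw [Polynomial.coeff_expand hn, if_neg]
      rintro ⟨e, he⟩
      have hji' : (j : ℕ) ≠ (i : ℕ) := fun hh => hji (Fin.ext hh)
      have h1 : n * k + (i : ℕ) = n * e + (j : ℕ) := by omega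
      have h2 : (n * k + (i : ℕ)) % n = (n * e + (j : ℕ)) % n := by rw [h1]
      rw [Nat.mul_add_mod, Nat.mul_add_mod, Nat.mod_eq_of_lt i.2, Nat.mod_eq_of_lt j.2] at h2
      exact hji' h2.symm
    · rfl
  · simp

noncomputable def ev : MvPolynomial (Fin 2) ℂ →ₐ[ℂ] Polynomial ℂ :=
  aeval (fun _ => Polynomial.X)

lemma ev_X (i : Fin 2) : ev (X i) = Polynomial.X := by simp [ev]

lemma ev_snIdeal (n : ℕ) : ∀ a ∈ snIdeal n, ev a = 0 := by
  intro a ha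
  obtain ⟨b, hb⟩ := Ideal.mem_span_singleton'.mp ha
  rw [← hb]
  simp [ev]

noncomputable def evb (n : ℕ) : (MvPolynomial (Fin 2) ℂ ⧸ snIdeal n) →ₐ[ℂ] Polynomial ℂ :=
  Ideal.Quotient.liftₐ (snIdeal n) ev (ev_snIdeal n)

lemma evb_mk (n : ℕ) (p : MvPolynomial (Fin 2) ℂ) :
    evb n (Ideal.Quotient.mk (snIdeal n) p) = ev p := rfl

lemma expand_eq_aeval (n : ℕ) :
    (Polynomial.aeval (Polynomial.X ^ n : Polynomial ℂ) : Polynomial ℂ →ₐ[ℂ] Polynomial ℂ)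
      = Polynomial.expand ℂ n := by
  apply Polynomial.algHom_ext
  simp

lemma cxn_rep (n : ℕ) (c : ↥(cxn n)) :
    ∃ p : Polynomial ℂ,
      Polynomial.aeval (Ideal.Quotient.mk (snIdeal n) (X 0 ^ n)) p = (c : MvPolynomial (Fin 2) ℂ ⧸ snIdeal n) := by
  have h := c.2
  have h2 : (c : MvPolynomial (Fin 2) ℂ ⧸ snIdeal n)
      ∈ (Polynomial.aeval (R := ℂ) (Ideal.Quotient.mk (snIdeal n) (X 0 ^ n))).range := by
    rw [← Algebra.adjoin_singleton_eq_range_aeval ℂ]; exact h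
  exact h2

lemma evb_aeval (n : ℕ) (p : Polynomial ℂ) :
    evb n (Polynomial.aeval (Ideal.Quotient.mk (snIdeal n) (X 0 ^ n)) p)
      = Polynomial.expand ℂ n p := by
  rw [← Polynomial.aeval_algHom_apply]
  rw [← expand_eq_aeval n]
  congr 1
  rw [evb_mk]
  simp [ev]

noncomputable def gpoly (n : ℕ) : MvPolynomial (Fin 2) ℂ :=
  ∑ i ∈ Finset.range n, X 0 ^ i * X 1 ^ (n - 1 - i)

lemma gpoly_mul (n : ℕ) : gpoly n * (X 0 - X 1) = X 0 ^ n - X 1 ^ n :=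
  geom_sum₂_mul _ _ n

lemma ev_gpoly (n : ℕ) : ev (gpoly n) = (n : ℂ) • Polynomial.X ^ (n - 1) := by
  rw [gpoly, map_sum]
  have : ∀ i ∈ Finset.range n, ev (X 0 ^ i * X 1 ^ (n - 1 - i)) = Polynomial.X ^ (n - 1) := by
    intro i hi
    rw [map_mul, map_pow, map_pow, ev_X, ev_X, ← pow_add]
    congr 1
    have := Finset.mem_range.mp hi
    omega
  rw [Finset.sum_congr rfl this, Finset.sum_const, Finset.card_range]
  simp [Algebra.smul_def, nsmul_eq_mul]

lemma gpoly_ne_zero (n : ℕ) (hn : 1 ≤ n) : gpoly n ≠ 0 := by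
  intro h
  have := congrArg ev h
  rw [ev_gpoly, map_zero] at this
  have hx : (Polynomial.X : Polynomial ℂ) ^ (n-1) ≠ 0 := pow_ne_zero _ Polynomial.X_ne_zero
  have hn' : (n : ℂ) ≠ 0 := Nat.cast_ne_zero.mpr (by omega)
  exact hx (by simpa [hn', smul_eq_zero] using this)

-- the class of x^n lies in cxn
lemma xn_mem (n : ℕ) : Ideal.Quotient.mk (snIdeal n) (X 0 ^ n) ∈ cxn n :=
  Algebra.subset_adjoin rfl

-- representation upstairs: every c ∈ cxn is the class of a polynomial in X0^n
lemma cxn_rep' (n : ℕ) (c : ↥(cxn n)) :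
    ∃ p : Polynomial ℂ,
      Ideal.Quotient.mk (snIdeal n) (Polynomial.aeval (X 0 ^ n : MvPolynomial (Fin 2) ℂ) p)
        = (c : MvPolynomial (Fin 2) ℂ ⧸ snIdeal n) := by
  obtain ⟨p, hp⟩ := cxn_rep n c
  refine ⟨p, ?_⟩
  rw [← hp, ← Ideal.Quotient.mkₐ_eq_mk ℂ]
  exact (Polynomial.aeval_algHom_apply (Ideal.Quotient.mkₐ ℂ (snIdeal n)) (X 0 ^ n) p).symm

lemma ev_aeval (n : ℕ) (p : Polynomial ℂ) :
    ev (Polynomial.aeval (X 0 ^ n : MvPolynomial (Fin 2) ℂ) p) = Polynomial.expand ℂ n p := by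
  rw [← Polynomial.aeval_algHom_apply ev _ p, ← expand_eq_aeval n]
  congr 1
  simp [ev]

lemma ker_mem (n : ℕ) (i : Fin n) :
    Ideal.Quotient.mk (snIdeal n) (gpoly n * X 0 ^ (i : ℕ)) ∈ LinearMap.ker (mulXsubY n) := by
  rw [LinearMap.mem_ker, LinearMap.mulLeft_apply, ← map_mul, Ideal.Quotient.eq_zero_iff_mem]
  have : (X 0 - X 1) * (gpoly n * X 0 ^ (i : ℕ))
      = (X 0 ^ n - X 1 ^ n) * X 0 ^ (i : ℕ) := by rw [← gpoly_mul n]; ring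
  rw [this]
  exact Ideal.mul_mem_right _ _ (Ideal.subset_span rfl)

lemma X_sub_X_ne_zero : (X 0 - X 1 : MvPolynomial (Fin 2) ℂ) ≠ 0 := by
  intro h
  have := congrArg (coeff (Finsupp.single (0 : Fin 2) 1)) h
  simp [coeff_X', Finsupp.single_eq_single_iff] at this

lemma ker_li (n : ℕ) (hn : 1 ≤ n) :
    LinearIndependent ↥(cxn n) (fun i : Fin n =>
      (⟨Ideal.Quotient.mk (snIdeal n) (gpoly n * X 0 ^ (i : ℕ)), ker_mem n i⟩ :
        ↥(LinearMap.ker (mulXsubY n)))) := by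
  rw [Fintype.linearIndependent_iff]
  intro c hc i
  -- pass to Sn
  have hc' : ∑ j : Fin n, (c j : MvPolynomial (Fin 2) ℂ ⧸ snIdeal n)
      * Ideal.Quotient.mk (snIdeal n) (gpoly n * X 0 ^ (j : ℕ)) = 0 := by
    have := congrArg (Subtype.val) hc
    push_cast at this
    simpa [Subalgebra.smul_def, smul_eq_mul] using this
  choose p hp using fun j => cxn_rep' n (c j)
  -- rewrite the sum as the class of a single polynomial
  have hsum : Ideal.Quotient.mk (snIdeal n)
      (∑ j : Fin n, Polynomial.aeval (X 0 ^ n : MvPolynomial (Fin 2) ℂ) (p j)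
        * (gpoly n * X 0 ^ (j : ℕ))) = 0 := by
    rw [map_sum]
    rw [← hc']
    refine Finset.sum_congr rfl fun j _ => ?_
    rw [map_mul, hp j]
  rw [Ideal.Quotient.eq_zero_iff_mem] at hsum
  obtain ⟨r, hr⟩ := Ideal.mem_span_singleton'.mp hsum
  -- cancel gpoly
  have hg : gpoly n * (∑ j : Fin n, Polynomial.aeval (X 0 ^ n : MvPolynomial (Fin 2) ℂ) (p j)
        * X 0 ^ (j : ℕ))
      = gpoly n * (r * (X 0 - X 1)) := by
    rw [Finset.mul_sum]
    rw [show gpoly n * (r * (X 0 - X 1)) = r * (gpoly n * (X 0 - X 1)) by ring, gpoly_mul, hr]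
    refine Finset.sum_congr rfl fun j _ => by ring
  have hcancel := mul_left_cancel₀ (gpoly_ne_zero n hn) hg
  -- apply ev
  have hev := congrArg ev hcancel
  rw [map_sum, map_mul, map_sub, ev_X, ev_X, sub_self, mul_zero] at hev
  have hev' : ∑ j : Fin n, Polynomial.expand ℂ n (p j) * Polynomial.X ^ (j : ℕ) = 0 := by
    rw [← hev]
    refine Finset.sum_congr rfl fun j _ => ?_
    rw [map_mul, map_pow, ev_X, ev_aeval]
  have hz := polyIndep n hn p hev' i
  have : (c i : MvPolynomial (Fin 2) ℂ ⧸ snIdeal n) = 0 := by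
    rw [← hp i, hz]; simp
  exact Subtype.ext this

set_option maxHeartbeats 1000000 in
set_option synthInstance.maxHeartbeats 200000 in
lemma coker_li (n : ℕ) (hn : 1 ≤ n) :
    LinearIndependent ↥(cxn n) (fun i : Fin n =>
      (Submodule.Quotient.mk (Ideal.Quotient.mk (snIdeal n) (X 0 ^ (i : ℕ))) :
        (MvPolynomial (Fin 2) ℂ ⧸ snIdeal n) ⧸ LinearMap.range (mulXsubY n))) := by
  rw [Fintype.linearIndependent_iff]
  intro c hc i
  set q' : (MvPolynomial (Fin 2) ℂ ⧸ snIdeal n) →ₗ[↥(cxn n)]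
      ((MvPolynomial (Fin 2) ℂ ⧸ snIdeal n) ⧸ LinearMap.range (mulXsubY n)) :=
    (Submodule.mkQ (LinearMap.range (mulXsubY n))).restrictScalars ↥(cxn n) with hq'
  have hc' : q' (∑ j : Fin n, c j • Ideal.Quotient.mk (snIdeal n) (X 0 ^ (j : ℕ))) = 0 := by
    rw [map_sum]
    simp only [map_smul]
    exact hc
  rw [← LinearMap.mem_ker, LinearMap.ker_restrictScalars, Submodule.restrictScalars_mem,
    Submodule.ker_mkQ, LinearMap.mem_range] at hc'
  obtain ⟨s, hs⟩ := hc'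
  have hsmul : ∑ j : Fin n, c j • Ideal.Quotient.mk (snIdeal n) (X 0 ^ (j : ℕ))
      = ∑ j : Fin n, (c j : MvPolynomial (Fin 2) ℂ ⧸ snIdeal n)
        * Ideal.Quotient.mk (snIdeal n) (X 0 ^ (j : ℕ)) := by
    refine Finset.sum_congr rfl fun j _ => ?_
    rw [Subalgebra.smul_def, smul_eq_mul]
  rw [hsmul] at hs
  have hev'' : evb n (∑ j : Fin n, (c j : MvPolynomial (Fin 2) ℂ ⧸ snIdeal n)
      * Ideal.Quotient.mk (snIdeal n) (X 0 ^ (j : ℕ))) = 0 := by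
    rw [← hs, LinearMap.mulLeft_apply, map_mul, evb_mk, map_sub, ev_X, ev_X, sub_self, zero_mul]
  choose p hp using fun j => cxn_rep n (c j)
  have hev' : ∑ j : Fin n, Polynomial.expand ℂ n (p j) * Polynomial.X ^ (j : ℕ) = 0 := by
    rw [← hev'', map_sum]
    refine Finset.sum_congr rfl fun j _ => ?_
    rw [map_mul, ← hp j, evb_aeval, evb_mk, map_pow, ev_X]
  have hz := polyIndep n hn p hev' i
  have : (c i : MvPolynomial (Fin 2) ℂ ⧸ snIdeal n) = 0 := by
    rw [← hp i, hz]; simp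
  exact Subtype.ext this

lemma mono_eq (u : Fin 2 →₀ ℕ) (a : ℂ) :
    (monomial u a : MvPolynomial (Fin 2) ℂ) = C a * X 0 ^ (u 0) * X 1 ^ (u 1) := by
  rw [monomial_eq, Finsupp.prod_fintype _ _ (fun i => pow_zero _), Fin.prod_univ_two, mul_assoc]

noncomputable def xnElt (n : ℕ) : ↥(cxn n) :=
  ⟨Ideal.Quotient.mk (snIdeal n) (X 0 ^ n), xn_mem n⟩

lemma coe_e (n : ℕ) (a : ℂ) (q : ℕ) :
    ((algebraMap ℂ ↥(cxn n) a * (xnElt n) ^ q : ↥(cxn n)) :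
        MvPolynomial (Fin 2) ℂ ⧸ snIdeal n)
      = Ideal.Quotient.mk (snIdeal n) (C a * X 0 ^ (n * q)) := by
  have h1 : Ideal.Quotient.mk (snIdeal n) (C a * X 0 ^ (n * q))
      = Ideal.Quotient.mk (snIdeal n) (C a) * (Ideal.Quotient.mk (snIdeal n) (X 0 ^ n)) ^ q := by
    rw [pow_mul, map_mul, map_pow]
  rw [h1, MulMemClass.coe_mul, SubmonoidClass.coe_pow, Subalgebra.coe_algebraMap,
    ← MvPolynomial.algebraMap_eq, Ideal.Quotient.mk_algebraMap]
  rfl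

lemma key_poly (n : ℕ) (u : Fin 2 →₀ ℕ) (a : ℂ) (w : MvPolynomial (Fin 2) ℂ)
    (hw : X 0 ^ (u 1) - X 1 ^ (u 1) = (X 0 - X 1) * w) :
    (X 0 - X 1) * (-(C a * X 0 ^ (u 0) * w))
      = (monomial u a : MvPolynomial (Fin 2) ℂ)
        - C a * X 0 ^ (n * ((u 0 + u 1) / n)) * X 0 ^ ((u 0 + u 1) % n) := by
  have hx : (X 0 : MvPolynomial (Fin 2) ℂ) ^ (n * ((u 0 + u 1) / n)) * X 0 ^ ((u 0 + u 1) % n)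
      = X 0 ^ (u 0) * X 0 ^ (u 1) := by
    rw [← pow_add, ← pow_add, Nat.div_add_mod (u 0 + u 1) n]
  rw [mono_eq]
  linear_combination (C a * X 0 ^ (u 0)) * hw + C a * hx

lemma coker_mono (n : ℕ) (u : Fin 2 →₀ ℕ) (a : ℂ) :
    (Submodule.Quotient.mk (Ideal.Quotient.mk (snIdeal n) (monomial u a)) :
        (MvPolynomial (Fin 2) ℂ ⧸ snIdeal n) ⧸ LinearMap.range (mulXsubY n))
      = (algebraMap ℂ ↥(cxn n) a * (xnElt n) ^ ((u 0 + u 1) / n)) •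
        Submodule.Quotient.mk (Ideal.Quotient.mk (snIdeal n) (X 0 ^ ((u 0 + u 1) % n))) := by
  rw [← Submodule.Quotient.mk_smul, Subalgebra.smul_def, smul_eq_mul, coe_e, ← map_mul]
  rw [Submodule.Quotient.eq]
  obtain ⟨w, hw⟩ := sub_dvd_pow_sub_pow (X 0 : MvPolynomial (Fin 2) ℂ) (X 1) (u 1)
  refine ⟨Ideal.Quotient.mk (snIdeal n) (-(C a * X 0 ^ (u 0) * w)), ?_⟩
  rw [LinearMap.mulLeft_apply, ← map_mul, ← map_sub]
  congr 1
  exact key_poly n u a w hw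

lemma ker_mono (n : ℕ) (u : Fin 2 →₀ ℕ) (a : ℂ) :
    Ideal.Quotient.mk (snIdeal n) (gpoly n * monomial u a)
      = (algebraMap ℂ ↥(cxn n) a * (xnElt n) ^ ((u 0 + u 1) / n)) •
        Ideal.Quotient.mk (snIdeal n) (gpoly n * X 0 ^ ((u 0 + u 1) % n)) := by
  rw [Subalgebra.smul_def, smul_eq_mul, coe_e, ← map_mul]
  rw [Ideal.Quotient.mk_eq_mk_iff_sub_mem]
  obtain ⟨w, hw⟩ := sub_dvd_pow_sub_pow (X 0 : MvPolynomial (Fin 2) ℂ) (X 1) (u 1)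
  refine Ideal.mem_span_singleton'.mpr ⟨-(C a * X 0 ^ (u 0) * w), ?_⟩
  have h1 := key_poly n u a w hw
  have h2 := gpoly_mul n
  calc -(C a * X 0 ^ (u 0) * w) * (X 0 ^ n - X 1 ^ n)
      = (gpoly n) * ((X 0 - X 1) * (-(C a * X 0 ^ (u 0) * w))) := by rw [← h2]; ring
    _ = gpoly n * monomial u a
        - C a * X 0 ^ (n * ((u 0 + u 1) / n)) * (gpoly n * X 0 ^ ((u 0 + u 1) % n)) := by
        linear_combination (gpoly n) * h1

lemma coker_span (n : ℕ) (hn : 1 ≤ n) :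
    ⊤ ≤ Submodule.span ↥(cxn n) (Set.range fun i : Fin n =>
      (Submodule.Quotient.mk (Ideal.Quotient.mk (snIdeal n) (X 0 ^ (i : ℕ))) :
        (MvPolynomial (Fin 2) ℂ ⧸ snIdeal n) ⧸ LinearMap.range (mulXsubY n))) := by
  intro z _
  obtain ⟨s, rfl⟩ := Submodule.Quotient.mk_surjective _ z
  obtain ⟨p, rfl⟩ := Ideal.Quotient.mk_surjective s
  induction p using MvPolynomial.induction_on' with
  | monomial u a =>
      rw [coker_mono n u a]
      exact Submodule.smul_mem _ _ (Submodule.subset_span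
        ⟨⟨(u 0 + u 1) % n, Nat.mod_lt _ (by omega)⟩, rfl⟩)
  | add p q hp hq =>
      rw [map_add, Submodule.Quotient.mk_add]
      exact Submodule.add_mem _ (hp trivial) (hq trivial)

lemma ker_span_aux (n : ℕ) (hn : 1 ≤ n) (r : MvPolynomial (Fin 2) ℂ) :
    Ideal.Quotient.mk (snIdeal n) (gpoly n * r) ∈ Submodule.span ↥(cxn n)
      (Set.range fun i : Fin n =>
        Ideal.Quotient.mk (snIdeal n) (gpoly n * X 0 ^ (i : ℕ))) := by
  induction r using MvPolynomial.induction_on' with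
  | monomial u a =>
      rw [ker_mono n u a]
      exact Submodule.smul_mem _ _ (Submodule.subset_span
        ⟨⟨(u 0 + u 1) % n, Nat.mod_lt _ (by omega)⟩, rfl⟩)
  | add p q hp hq =>
      rw [mul_add, map_add]
      exact Submodule.add_mem _ hp hq

lemma ker_span (n : ℕ) (hn : 1 ≤ n) :
    ⊤ ≤ Submodule.span ↥(cxn n) (Set.range fun i : Fin n =>
      (⟨Ideal.Quotient.mk (snIdeal n) (gpoly n * X 0 ^ (i : ℕ)), ker_mem n i⟩ :
        ↥(LinearMap.ker (mulXsubY n)))) := by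
  intro v _
  obtain ⟨p, hp⟩ := Ideal.Quotient.mk_surjective
    (v : MvPolynomial (Fin 2) ℂ ⧸ snIdeal n)
  have hv : mulXsubY n (v : MvPolynomial (Fin 2) ℂ ⧸ snIdeal n) = 0 :=
    LinearMap.mem_ker.mp v.2
  rw [← hp, LinearMap.mulLeft_apply, ← map_mul, Ideal.Quotient.eq_zero_iff_mem] at hv
  obtain ⟨w, hw⟩ := Ideal.mem_span_singleton'.mp hv
  have hpw : p = gpoly n * w := by
    have h1 : (X 0 - X 1 : MvPolynomial (Fin 2) ℂ) * p
        = (X 0 - X 1) * (gpoly n * w) := by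
      rw [← hw, ← gpoly_mul n]; ring
    exact mul_left_cancel₀ X_sub_X_ne_zero h1
  have hvs : (v : MvPolynomial (Fin 2) ℂ ⧸ snIdeal n)
      ∈ Submodule.span ↥(cxn n) (Set.range fun i : Fin n =>
        Ideal.Quotient.mk (snIdeal n) (gpoly n * X 0 ^ (i : ℕ))) := by
    rw [← hp, hpw]
    exact ker_span_aux n hn w
  set j : ↥(LinearMap.ker (mulXsubY n)) →ₗ[↥(cxn n)]
      (MvPolynomial (Fin 2) ℂ ⧸ snIdeal n) :=
    ((LinearMap.ker (mulXsubY n)).subtype).restrictScalars ↥(cxn n) with hj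
  have himg : (Set.range fun i : Fin n =>
        Ideal.Quotient.mk (snIdeal n) (gpoly n * X 0 ^ (i : ℕ)))
      = j '' (Set.range fun i : Fin n =>
        (⟨Ideal.Quotient.mk (snIdeal n) (gpoly n * X 0 ^ (i : ℕ)), ker_mem n i⟩ :
          ↥(LinearMap.ker (mulXsubY n)))) := by
    rw [← Set.range_comp]
    rfl
  rw [himg, ← Submodule.map_span] at hvs
  obtain ⟨w', hw', hww⟩ := hvs
  have hwv : w' = v := Subtype.ext hww
  exact hwv ▸ hw'


/-- For `n ≥ 1` and `μ` multiplication by the class of `x - y` on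
`S_n = ℂ[x,y]/(xⁿ - yⁿ)`, both the kernel and the cokernel of `μ` are free modules of
rank `n` over the subring `ℂ[xⁿ]` of `S_n` generated by the class of `xⁿ`. -/
theorem equivariant_ker_coker_free (n : ℕ) (hn : 1 ≤ n) :
    Nonempty (Module.Basis (Fin n) ↥(cxn n) ↥(LinearMap.ker (mulXsubY n))) ∧
    Nonempty (Module.Basis (Fin n) ↥(cxn n)
      ((MvPolynomial (Fin 2) ℂ ⧸ snIdeal n) ⧸ LinearMap.range (mulXsubY n))) := by
  exact ⟨⟨Module.Basis.mk (ker_li n hn) (ker_span n hn)⟩,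
    ⟨Module.Basis.mk (coker_li n hn) (coker_span n hn)⟩⟩
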